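/- Every n-dimensional simplex S ⊆ ℝⁿ can be covered by at most (n+1)·C(n²−2, n−1) n-dimensional parallelepipeds, each contained in S. -/

import Mathlib

/-- A parallelepiped in `ℝⁿ` is a set `{x : b ≤ Ax ≤ c}` for a non-singular matrix `A`
and vectors `b < c`. -/
def IsParallelepiped {n : ℕ} (Q : Set (Fin n → ℝ)) : Prop :=
  ∃ (A : Matrix (Fin n) (Fin n) ℝ) (b c : Fin n → ℝ),
    A.det ≠ 0 ∧ (∀ i, b i < c i) ∧
    Q = {x | ∀ i, b i ≤ ∑ j, A i j * x j ∧ ∑ j, A i j * x j ≤ c i}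

section SimplexCoverAux

set_option linter.unusedSectionVars false

lemma mem_hull_iff {n m : ℕ} (v : Fin m → (Fin n → ℝ)) (x : Fin n → ℝ) :
    x ∈ convexHull ℝ (Set.range v) ↔
      ∃ w : Fin m → ℝ, (∀ k, 0 ≤ w k) ∧ ∑ k, w k = 1 ∧ x = ∑ k, w k • v k := by
  constructor
  · intro hx
    rw [convexHull_range_eq_exists_affineCombination] at hx
    obtain ⟨s, w, hw0, hw1, hx⟩ := hx
    refine ⟨fun k => if k ∈ s then w k else 0, ?_, ?_, ?_⟩
    · intro k; dsimp only; split
      · exact hw0 _ ‹_›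
      · exact le_refl 0
    · rw [Finset.sum_ite_mem, Finset.univ_inter, hw1]
    · rw [← hx, Finset.affineCombination_eq_linear_combination s v w hw1]
      simp only [ite_smul, zero_smul, Finset.sum_ite_mem, Finset.univ_inter]
  · rintro ⟨w, hw0, hw1, rfl⟩
    have h := Finset.centerMass_mem_convexHull (s := Set.range v) Finset.univ
      (fun k _ => hw0 k) (by rw [hw1]; norm_num) (fun k _ => Set.mem_range_self k)
    rwa [Finset.centerMass_eq_of_sum_1 _ _ hw1] at h

lemma det_ne_aux {n : ℕ} (v : Fin (n+1) → (Fin n → ℝ)) (hv : AffineIndependent ℝ v)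
    (i : Fin (n+1)) :
    (Matrix.of fun r j : Fin n => v (i.succAbove j) r - v i r).det ≠ 0 := by
  intro hdet
  obtain ⟨u, hu, humul⟩ := Matrix.exists_mulVec_eq_zero_iff.mpr hdet
  have hli : LinearIndependent ℝ fun j : Fin n => v (i.succAbove j) - v i := by
    have h1 := (affineIndependent_iff_linearIndependent_vsub ℝ v i).mp hv
    have h2 := h1.comp (fun j : Fin n => (⟨i.succAbove j, Fin.succAbove_ne i j⟩ : {x // x ≠ i}))
      (fun a b hab => Fin.succAbove_right_injective (congrArg Subtype.val hab))
    simpa [vsub_eq_sub, Function.comp_def] using h2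
  apply hu
  have h0 : (∑ j, u j • (v (i.succAbove j) - v i)) = 0 := by
    funext r
    have hr := congrFun humul r
    simpa [Matrix.mulVec, dotProduct, Finset.sum_apply, mul_comm] using hr
  have := Fintype.linearIndependent_iff.mp hli u h0
  funext j; exact this j

lemma sum_smul_eq_aux {n : ℕ} (v : Fin (n+1) → (Fin n → ℝ)) (i : Fin (n+1)) (w : Fin (n+1) → ℝ)
    (hw : ∑ k, w k = 1) :
    ∑ k, w k • v k = v i +
      (Matrix.of fun r j : Fin n => v (i.succAbove j) r - v i r).mulVec
        (fun j => w (i.succAbove j)) := by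
  funext r
  have hs : ∑ k, w k * v k r = w i * v i r + ∑ j, w (i.succAbove j) * v (i.succAbove j) r :=
    Fin.sum_univ_succAbove (fun k => w k * v k r) i
  have hw' : w i = 1 - ∑ j, w (i.succAbove j) := by
    have h2 := Fin.sum_univ_succAbove w i
    rw [h2] at hw; linarith
  simp only [Finset.sum_apply, Pi.smul_apply, smul_eq_mul, Pi.add_apply, Matrix.mulVec,
    dotProduct, Matrix.of_apply]
  rw [hs, hw']
  have h3 : ∑ j, (v (i.succAbove j) r - v i r) * w (i.succAbove j)
      = ∑ j, w (i.succAbove j) * v (i.succAbove j) r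
        - (∑ j, w (i.succAbove j)) * v i r := by
    rw [Finset.sum_mul, ← Finset.sum_sub_distrib]
    apply Finset.sum_congr rfl; intros; ring
  rw [h3]; ring

lemma card_multiset_sum {n : ℕ} (s : Finset (Fin n)) (f : Fin n → Multiset (Fin n)) :
    Multiset.card (∑ j ∈ s, f j) = ∑ j ∈ s, Multiset.card (f j) := by
  classical
  induction s using Finset.induction_on with
  | empty => simp
  | insert _ _ h ih => rw [Finset.sum_insert h, Finset.sum_insert h, Multiset.card_add, ih]

lemma card_comp_le (n k : ℕ) :
    (Finset.Nat.antidiagonalTuple n k).card ≤ (n + k - 1).choose k := by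
  rw [← Fintype.card_coe]
  have hcount : ∀ g : Fin n → ℕ, ∀ j,
      Multiset.count j (∑ i, Multiset.replicate (g i) i) = g j := by
    intro g j
    rw [Multiset.count_sum']
    simp only [Multiset.count_replicate]
    simp
  have hinj : Function.Injective
      (fun g : {g // g ∈ Finset.Nat.antidiagonalTuple n k} =>
        (⟨∑ j, Multiset.replicate (g.1 j) j, by
          rw [card_multiset_sum]
          simpa using Finset.Nat.mem_antidiagonalTuple.mp g.2⟩ : Sym (Fin n) k)) := by
    intro g₁ g₂ h
    have hm : (∑ j, Multiset.replicate (g₁.1 j) j) = ∑ j, Multiset.replicate (g₂.1 j) j := by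
      simpa [Sym] using congrArg Subtype.val h
    ext j
    have hc := congrArg (Multiset.count j) hm
    rwa [hcount, hcount] at hc
  calc Fintype.card {g // g ∈ Finset.Nat.antidiagonalTuple n k}
      ≤ Fintype.card (Sym (Fin n) k) := Fintype.card_le_of_injective _ hinj
    _ = (n + k - 1).choose k := by rw [Sym.card_sym_eq_choose, Fintype.card_fin]

lemma hull_seg (v : Fin 2 → (Fin 1 → ℝ)) (x : Fin 1 → ℝ) :
    x ∈ convexHull ℝ (Set.range v) ↔
      min (v 0 0) (v 1 0) ≤ x 0 ∧ x 0 ≤ max (v 0 0) (v 1 0) := by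
  rw [mem_hull_iff]
  constructor
  · rintro ⟨w, hw0, hw1, rfl⟩
    rw [Fin.sum_univ_two] at hw1
    have h0 := hw0 0; have h1 := hw0 1
    simp only [Finset.sum_apply, Pi.smul_apply, smul_eq_mul, Fin.sum_univ_two]
    constructor
    · calc min (v 0 0) (v 1 0) = w 0 * min (v 0 0) (v 1 0) + w 1 * min (v 0 0) (v 1 0) := by
            rw [← add_mul, hw1, one_mul]
        _ ≤ w 0 * v 0 0 + w 1 * v 1 0 :=
            add_le_add (mul_le_mul_of_nonneg_left (min_le_left _ _) h0)
              (mul_le_mul_of_nonneg_left (min_le_right _ _) h1)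
    · calc w 0 * v 0 0 + w 1 * v 1 0
          ≤ w 0 * max (v 0 0) (v 1 0) + w 1 * max (v 0 0) (v 1 0) :=
            add_le_add (mul_le_mul_of_nonneg_left (le_max_left _ _) h0)
              (mul_le_mul_of_nonneg_left (le_max_right _ _) h1)
        _ = max (v 0 0) (v 1 0) := by rw [← add_mul, hw1, one_mul]
  · rintro ⟨hmin, hmax⟩
    rcases le_total (v 0 0) (v 1 0) with hc | hc
    · rw [min_eq_left hc] at hmin; rw [max_eq_right hc] at hmax
      rcases eq_or_lt_of_le hc with he | hlt
      · refine ⟨![1, 0], ?_, by simp [Fin.sum_univ_two], ?_⟩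
        · intro k; fin_cases k <;> norm_num
        · funext j
          rw [Subsingleton.elim j 0]
          simp only [Finset.sum_apply, Pi.smul_apply, smul_eq_mul, Fin.sum_univ_two]
          norm_num; linarith
      · set d := v 1 0 - v 0 0 with hd
        have hd0 : 0 < d := by simp [hd]; linarith
        set θ := (v 1 0 - x 0) / d with hθ
        have hθ0 : 0 ≤ θ := div_nonneg (by linarith) hd0.le
        have hθ1 : θ ≤ 1 := by rw [hθ, div_le_one hd0]; simp [hd]; linarith
        refine ⟨![θ, 1 - θ], ?_, by simp [Fin.sum_univ_two], ?_⟩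
        · intro k; fin_cases k <;> simp <;> linarith
        · funext j
          rw [Subsingleton.elim j 0]
          simp only [Finset.sum_apply, Pi.smul_apply, smul_eq_mul, Fin.sum_univ_two]
          show x 0 = θ * v 0 0 + (1 - θ) * v 1 0
          rw [hθ]; field_simp; ring
    · rw [min_eq_right hc] at hmin; rw [max_eq_left hc] at hmax
      rcases eq_or_lt_of_le hc with he | hlt
      · refine ⟨![1, 0], ?_, by simp [Fin.sum_univ_two], ?_⟩
        · intro k; fin_cases k <;> norm_num
        · funext j
          rw [Subsingleton.elim j 0]
          simp only [Finset.sum_apply, Pi.smul_apply, smul_eq_mul, Fin.sum_univ_two]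
          norm_num; linarith
      · set d := v 0 0 - v 1 0 with hd
        have hd0 : 0 < d := by simp [hd]; linarith
        set θ := (v 0 0 - x 0) / d with hθ
        have hθ0 : 0 ≤ θ := div_nonneg (by linarith) hd0.le
        have hθ1 : θ ≤ 1 := by rw [hθ, div_le_one hd0]; simp [hd]; linarith
        refine ⟨![1 - θ, θ], ?_, by simp [Fin.sum_univ_two], ?_⟩
        · intro k; fin_cases k <;> simp <;> linarith
        · funext j
          rw [Subsingleton.elim j 0]
          simp only [Finset.sum_apply, Pi.smul_apply, smul_eq_mul, Fin.sum_univ_two]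
          show x 0 = (1 - θ) * v 0 0 + θ * v 1 0
          rw [hθ]; field_simp; ring

lemma case_one (v : Fin 2 → (Fin 1 → ℝ)) (hv : AffineIndependent ℝ v) :
    IsParallelepiped (convexHull ℝ (Set.range v)) := by
  have hne : v 0 0 ≠ v 1 0 := by
    intro h
    have h2 : v 0 = v 1 := funext fun j => by rw [Subsingleton.elim j 0]; exact h
    exact (by norm_num : (0 : Fin 2) ≠ 1) (hv.injective h2)
  refine ⟨1, (fun _ => min (v 0 0) (v 1 0)), (fun _ => max (v 0 0) (v 1 0)),
    by simp, fun _ => min_lt_max.mpr hne, ?_⟩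
  ext x
  rw [Set.mem_setOf_eq, hull_seg]
  have hsum : ∀ i : Fin 1, ∑ j, (1 : Matrix (Fin 1) (Fin 1) ℝ) i j * x j = x 0 := by
    intro i
    rw [Subsingleton.elim i 0]
    simp [Matrix.one_apply]
  constructor
  · rintro ⟨h1, h2⟩ i
    rw [hsum i]; exact ⟨h1, h2⟩
  · intro h
    obtain ⟨h1, h2⟩ := h 0
    rw [hsum 0] at h1 h2; exact ⟨h1, h2⟩

noncomputable def Mv {n : ℕ} (v : Fin (n+1) → (Fin n → ℝ)) (i : Fin (n+1)) :
    Matrix (Fin n) (Fin n) ℝ :=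
  Matrix.of fun r j => v (i.succAbove j) r - v i r

noncomputable def Av {n : ℕ} (v : Fin (n+1) → (Fin n → ℝ)) (i : Fin (n+1)) :
    Matrix (Fin n) (Fin n) ℝ :=
  (Mv v i)⁻¹

def BoxSet {n : ℕ} (v : Fin (n+1) → (Fin n → ℝ)) (N : ℕ) (i : Fin (n+1))
    (g : Fin n → ℕ) : Set (Fin n → ℝ) :=
  {x | ∀ r, (Av v i).mulVec (v i) r ≤ (Av v i).mulVec x r ∧
       (Av v i).mulVec x r ≤ (Av v i).mulVec (v i) r + ((g r : ℝ) + 1) / N}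

lemma sum_smul_Mv' {n : ℕ} (v : Fin (n+1) → (Fin n → ℝ)) (i : Fin (n+1))
    (w : Fin (n+1) → ℝ) (hw : ∑ k, w k = 1) :
    ∑ k, w k • v k = v i + (Mv v i).mulVec (fun j => w (i.succAbove j)) :=
  sum_smul_eq_aux v i w hw

variable {n : ℕ} (v : Fin (n+1) → (Fin n → ℝ)) (hv : AffineIndependent ℝ v)
include hv

lemma Mv_det_ne (i : Fin (n+1)) : (Mv v i).det ≠ 0 := det_ne_aux v hv i

lemma AvMv' (i : Fin (n+1)) : Av v i * Mv v i = 1 :=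
  Matrix.nonsing_inv_mul _ (isUnit_iff_ne_zero.mpr (Mv_det_ne v hv i))

lemma MvAv' (i : Fin (n+1)) : Mv v i * Av v i = 1 :=
  Matrix.mul_nonsing_inv _ (isUnit_iff_ne_zero.mpr (Mv_det_ne v hv i))

lemma Av_det_ne (i : Fin (n+1)) : (Av v i).det ≠ 0 := by
  intro h
  have h2 := Matrix.det_mul (Mv v i) (Av v i)
  rw [MvAv' v hv i, Matrix.det_one, h, mul_zero] at h2
  exact one_ne_zero h2

lemma box_isPar {N : ℕ} (hN : 0 < N) (i : Fin (n+1)) (g : Fin n → ℕ) :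
    ∃ (A : Matrix (Fin n) (Fin n) ℝ) (b c : Fin n → ℝ),
      A.det ≠ 0 ∧ (∀ r, b r < c r) ∧
      BoxSet v N i g = {x | ∀ r, b r ≤ ∑ j, A r j * x j ∧ ∑ j, A r j * x j ≤ c r} := by
  have hNR0 : (0:ℝ) < N := by exact_mod_cast hN
  refine ⟨Av v i, (Av v i).mulVec (v i),
    fun r => (Av v i).mulVec (v i) r + ((g r : ℝ) + 1) / N,
    Av_det_ne v hv i, fun r => lt_add_of_pos_right _ (div_pos (by positivity) hNR0), ?_⟩
  ext x
  simp only [BoxSet, Set.mem_setOf_eq, Matrix.mulVec, dotProduct]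

lemma box_subset {N : ℕ} (hN : 0 < N) (hNn : n ≤ N) (i : Fin (n+1)) (g : Fin n → ℕ)
    (hg : ∑ j, g j = N - n) :
    BoxSet v N i g ⊆ convexHull ℝ (Set.range v) := by
  intro x hx
  have hNR0 : (0:ℝ) < N := by exact_mod_cast hN
  set μ : Fin n → ℝ := fun j => (Av v i).mulVec x j - (Av v i).mulVec (v i) j with hμdef
  have hμ0 : ∀ j, 0 ≤ μ j := fun j => by
    have := (hx j).1; rw [hμdef]; dsimp only; linarith
  have hμub : ∀ j, μ j ≤ ((g j : ℝ) + 1) / N := fun j => by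
    have := (hx j).2; rw [hμdef]; dsimp only; linarith
  have htop : ∑ j, ((g j : ℝ) + 1) / N = 1 := by
    rw [← Finset.sum_div, div_eq_one_iff_eq (ne_of_gt hNR0)]
    have h1 : ∑ j, ((g j : ℝ) + 1) = ((∑ j, g j + n : ℕ) : ℝ) := by
      push_cast; rw [Finset.sum_add_distrib]; simp
    rw [h1, hg]
    congr 1
    omega
  have hμsum : ∑ j, μ j ≤ 1 := by
    rw [← htop]
    exact Finset.sum_le_sum fun j _ => hμub j
  have hrec : v i + (Mv v i).mulVec μ = x := by
    have hμvec : μ = (Av v i).mulVec x - (Av v i).mulVec (v i) := by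
      funext j; rw [hμdef]; simp
    rw [hμvec, ← Matrix.mulVec_sub, Matrix.mulVec_mulVec, MvAv' v hv i, Matrix.one_mulVec]
    simp
  set w : Fin (n+1) → ℝ := i.insertNth (1 - ∑ j, μ j) μ with hwdef
  have hw0 : ∀ k, 0 ≤ w k := by
    intro k
    rcases eq_or_ne k i with rfl | hk
    · rw [hwdef]; rw [Fin.insertNth_apply_same]; linarith
    · obtain ⟨j, rfl⟩ := Fin.exists_succAbove_eq hk
      rw [hwdef, Fin.insertNth_apply_succAbove]; exact hμ0 j
  have hw1 : ∑ k, w k = 1 := by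
    rw [Fin.sum_univ_succAbove w i, hwdef, Fin.insertNth_apply_same]
    simp only [Fin.insertNth_apply_succAbove]
    ring
  rw [mem_hull_iff]
  refine ⟨w, hw0, hw1, ?_⟩
  rw [sum_smul_Mv' v i w hw1]
  have : (fun j => w (i.succAbove j)) = μ := by
    funext j; rw [hwdef, Fin.insertNth_apply_succAbove]
  rw [this, hrec]

lemma box_cover (hn2 : 2 ≤ n) (x : Fin n → ℝ) (hx : x ∈ convexHull ℝ (Set.range v)) :
    ∃ (i : Fin (n+1)) (g : Fin n → ℕ),
      (∑ j, g j = (n^2 - 1) - n) ∧ x ∈ BoxSet v (n^2 - 1) i g := by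
  obtain ⟨q, hq, hq1, hq2⟩ : ∃ q, n ^ 2 = q ∧ 2 * n ≤ q ∧ 4 ≤ q :=
    ⟨n ^ 2, rfl, by nlinarith, by nlinarith⟩
  set N : ℕ := n ^ 2 - 1 with hNdef
  have hNq : N = q - 1 := by rw [hNdef, hq]
  have hN0 : 0 < N := by omega
  have hNn : n ≤ N := by omega
  have hNR0 : (0:ℝ) < N := by exact_mod_cast hN0
  have hNR : (N:ℝ) = (n:ℝ)^2 - 1 := by
    have h1 : 1 ≤ n ^ 2 := by omega
    rw [hNdef, Nat.cast_sub h1]; push_cast; ring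
  obtain ⟨w, hw0, hw1, hxw⟩ := (mem_hull_iff v x).mp hx
  obtain ⟨i, -, hmax⟩ := Finset.exists_max_image Finset.univ w ⟨0, Finset.mem_univ 0⟩
  set μ : Fin n → ℝ := fun j => w (i.succAbove j) with hμdef
  have hμ0 : ∀ j, 0 ≤ μ j := fun j => hw0 _
  have hμsum : ∑ j, μ j = 1 - w i := by
    have h2 := Fin.sum_univ_succAbove w i
    rw [h2] at hw1
    rw [hμdef]; linarith
  have hwi : 1 ≤ ((n:ℝ) + 1) * w i := by
    have h3 := Finset.sum_le_card_nsmul Finset.univ w (w i) (fun k _ => hmax k (Finset.mem_univ k))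
    rw [hw1, Finset.card_univ, Fintype.card_fin, nsmul_eq_mul] at h3
    push_cast at h3 ⊢
    linarith
  set m : Fin n → ℕ := fun j => max 1 ⌈(N:ℝ) * μ j⌉₊ with hmdef
  have hm1 : ∀ j, 1 ≤ m j := fun j => le_max_left _ _
  have hmμ : ∀ j, (N:ℝ) * μ j ≤ m j := by
    intro j
    calc (N:ℝ) * μ j ≤ ⌈(N:ℝ) * μ j⌉₊ := Nat.le_ceil _
      _ ≤ (m j : ℝ) := by exact_mod_cast le_max_right _ _
  have hmsum : ∑ j, m j ≤ N := by
    by_cases hz : ∀ j, μ j = 0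
    · have hone : ∀ j, m j = 1 := by
        intro j; rw [hmdef]; simp [hz j]
      rw [Finset.sum_congr rfl fun j _ => hone j]
      simp only [Finset.sum_const, Finset.card_univ, Fintype.card_fin, smul_eq_mul, mul_one]
      omega
    · push_neg at hz
      obtain ⟨j1, hj1⟩ := hz
      have hj1' : 0 < μ j1 := lt_of_le_of_ne (hμ0 j1) (Ne.symm hj1)
      have hterm : ∀ j ∈ Finset.univ, (m j : ℝ) ≤ (N:ℝ) * μ j + 1 := by
        intro j _
        rw [hmdef]
        push_cast [Nat.cast_max]
        apply max_le
        · nlinarith [mul_nonneg hNR0.le (hμ0 j)]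
        · exact (Nat.ceil_lt_add_one (mul_nonneg hNR0.le (hμ0 j))).le
      have hstrict : (m j1 : ℝ) < (N:ℝ) * μ j1 + 1 := by
        rw [hmdef]
        push_cast [Nat.cast_max]
        apply max_lt
        · nlinarith [mul_pos hNR0 hj1']
        · exact Nat.ceil_lt_add_one (mul_nonneg hNR0.le (hμ0 j1))
      have hsumlt : (∑ j, (m j : ℝ)) < ∑ j, ((N:ℝ) * μ j + 1) :=
        Finset.sum_lt_sum hterm ⟨j1, Finset.mem_univ j1, hstrict⟩
      have heq : ∑ j, ((N:ℝ) * μ j + 1) = (N:ℝ) * (1 - w i) + n := by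
        rw [Finset.sum_add_distrib, ← Finset.mul_sum, hμsum]
        simp
      have hle : (N:ℝ) * (1 - w i) + n ≤ (n:ℝ)^2 := by
        have hn1 : (0:ℝ) ≤ (n:ℝ) - 1 := by
          have : (1:ℝ) ≤ (n:ℝ) := by exact_mod_cast (by omega : 1 ≤ n)
          linarith
        nlinarith [mul_le_mul_of_nonneg_left hwi hn1]
      have hlt2 : (∑ j, (m j:ℝ)) < (n:ℝ)^2 := by linarith
      have hlt3 : ∑ j, m j < n ^ 2 := by
        have : ((∑ j, m j : ℕ) : ℝ) < ((n ^ 2 : ℕ) : ℝ) := by push_cast; linarith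
        exact_mod_cast this
      rw [hq] at hlt3
      omega
  have hnn0 : 0 < n := by omega
  set z : Fin n → ℕ := fun j => if j = ⟨0, hnn0⟩ then m j + (N - ∑ k, m k) else m j with hzdef
  have hzm : ∀ j, m j ≤ z j := by
    intro j; rw [hzdef]; dsimp only; split
    · exact Nat.le_add_right _ _
    · exact le_refl _
  have hz1 : ∀ j, 1 ≤ z j := fun j => le_trans (hm1 j) (hzm j)
  have hzsum : ∑ j, z j = N := by
    rw [hzdef]
    have hsplit : ∀ j : Fin n, (if j = ⟨0, hnn0⟩ then m j + (N - ∑ k, m k) else m j)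
        = m j + (if j = ⟨0, hnn0⟩ then (N - ∑ k, m k) else 0) := by
      intro j; split <;> simp
    rw [Finset.sum_congr rfl fun j _ => hsplit j, Finset.sum_add_distrib,
      Finset.sum_ite_eq' Finset.univ _ (fun _ => N - ∑ k, m k)]
    simp only [Finset.mem_univ, if_true]
    omega
  have hxrep : x = v i + (Mv v i).mulVec μ := by
    rw [hxw, sum_smul_Mv' v i w hw1]
  have hμx : (Av v i).mulVec x - (Av v i).mulVec (v i) = μ := by
    rw [hxrep, Matrix.mulVec_add, Matrix.mulVec_mulVec, AvMv' v hv i, Matrix.one_mulVec]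
    simp
  refine ⟨i, fun j => z j - 1, ?_, ?_⟩
  · show (∑ j, (z j - 1)) = N - n
    have hsplit2 : ∑ j, (z j - 1) + ∑ _j : Fin n, 1 = ∑ j, z j := by
      rw [← Finset.sum_add_distrib]
      apply Finset.sum_congr rfl
      intro j _
      have := hz1 j; omega
    simp only [Finset.sum_const, Finset.card_univ, Fintype.card_fin, smul_eq_mul,
      mul_one] at hsplit2
    omega
  · intro r
    have h1 : (Av v i).mulVec x r - (Av v i).mulVec (v i) r = μ r := by
      have := congrFun hμx r
      simpa using this
    have hcast : ((z r - 1 : ℕ) : ℝ) + 1 = (z r : ℝ) := by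
      have := hz1 r
      push_cast [Nat.cast_sub this]
      ring
    constructor
    · have := hμ0 r; linarith
    · show (Av v i).mulVec x r ≤ (Av v i).mulVec (v i) r + (((z r - 1 : ℕ) : ℝ) + 1) / N
      rw [hcast]
      have h2 : μ r ≤ (z r : ℝ) / N := by
        rw [le_div_iff₀ hNR0, mul_comm]
        calc (N:ℝ) * μ r ≤ m r := hmμ r
          _ ≤ (z r : ℝ) := by exact_mod_cast hzm r
      linarith

end SimplexCoverAux

/-- Every `n`-dimensional simplex can be covered by at most `(n+1)·C(n²−2, n−1)`
parallelepipeds contained in it. -/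
theorem simplex_covered_by_parallelepipeds {n : ℕ} (hn : 1 ≤ n)
    (v : Fin (n + 1) → (Fin n → ℝ)) (hv : AffineIndependent ℝ v) :
    ∃ (t : ℕ) (B : Fin t → Set (Fin n → ℝ)),
      t ≤ (n + 1) * Nat.choose (n ^ 2 - 2) (n - 1) ∧
      (∀ i, IsParallelepiped (B i)) ∧
      (∀ i, B i ⊆ convexHull ℝ (Set.range v)) ∧
      convexHull ℝ (Set.range v) = ⋃ i, B i := by
  rcases eq_or_lt_of_le hn with h1 | hn2
  · obtain rfl : n = 1 := h1.symm
    exact ⟨1, fun _ => convexHull ℝ (Set.range v), by norm_num, fun _ => case_one v hv,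
      fun _ => subset_rfl, (Set.iUnion_const _).symm⟩
  · have hn2' : 2 ≤ n := hn2
    classical
    obtain ⟨q, hq, hq1⟩ : ∃ q, n ^ 2 = q ∧ 2 * n ≤ q := ⟨n ^ 2, rfl, by nlinarith⟩
    set N : ℕ := n ^ 2 - 1 with hNdef
    have hNq : N = q - 1 := by rw [hNdef, hq]
    have hN0 : 0 < N := by omega
    have hNn : n ≤ N := by omega
    let Y := {g // g ∈ Finset.Nat.antidiagonalTuple n (N - n)}
    let e := Fintype.equivFin (Fin (n+1) × Y)
    refine ⟨Fintype.card (Fin (n+1) × Y),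
      fun k => BoxSet v N (e.symm k).1 ((e.symm k).2 : Y).1, ?_, ?_, ?_, ?_⟩
    · rw [Fintype.card_prod, Fintype.card_fin]
      apply Nat.mul_le_mul_left
      have hcard : Fintype.card Y = (Finset.Nat.antidiagonalTuple n (N - n)).card :=
        Fintype.card_coe _
      rw [hcard]
      refine le_trans (card_comp_le n (N - n)) ?_
      have h1 : n + (N - n) - 1 = n ^ 2 - 2 := by rw [hq]; omega
      have h2 : (n ^ 2 - 2).choose (N - n) = (n ^ 2 - 2).choose (n - 1) := by
        have h3 : N - n = (n ^ 2 - 2) - (n - 1) := by rw [hq]; omega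
        rw [h3]
        exact Nat.choose_symm (by rw [hq]; omega)
      rw [h1, h2]
    · intro k
      obtain ⟨A, b, c, h1, h2, h3⟩ := box_isPar v hv hN0 (e.symm k).1 ((e.symm k).2 : Y).1
      exact ⟨A, b, c, h1, h2, h3⟩
    · intro k
      have hg := Finset.Nat.mem_antidiagonalTuple.mp ((e.symm k).2).2
      exact box_subset v hv hN0 hNn _ _ hg
    · ext x
      simp only [Set.mem_iUnion]
      constructor
      · intro hx
        obtain ⟨i, g, hgsum, hmem⟩ := box_cover v hv hn2' x hx
        refine ⟨e ⟨i, ⟨g, Finset.Nat.mem_antidiagonalTuple.mpr hgsum⟩⟩, ?_⟩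
        rw [Equiv.symm_apply_apply]
        exact hmem
      · rintro ⟨k, hk⟩
        have hg := Finset.Nat.mem_antidiagonalTuple.mp ((e.symm k).2).2
        exact box_subset v hv hN0 hNn _ _ hg hk
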